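/- arXiv:1807.00268 — 2 statements merged into one kernel-verified Lean document; each statement's English description precedes it below -/
import Mathlib

section
/- Let L be a dually ms Stone semi-Heyting algebra. Then for all x in L, x*″ ≤ x′*′. -/
class SemiHeyting (α : Type*) extends Lattice α, BoundedOrder α where
  himp : α → α → α
  sh1 : ∀ x y : α, x ⊓ himp x y = x ⊓ y
  sh2 : ∀ x y z : α, x ⊓ himp y z = x ⊓ himp (x ⊓ y) (x ⊓ z)
  sh3 : ∀ x : α, himp x x = ⊤

namespace SemiHeyting

variable {α : Type*} [SemiHeyting α]

def star (x : α) : α := himp x ⊥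

end SemiHeyting

class DQD (α : Type*) extends SemiHeyting α where
  prime : α → α
  prime_bot : prime ⊥ = ⊤
  prime_top : prime ⊤ = ⊥
  prime_inf : ∀ x y : α, prime (x ⊓ y) = prime x ⊔ prime y
  prime_prime_sup : ∀ x y : α, prime (prime (x ⊔ y)) = prime (prime x) ⊔ prime (prime y)
  prime_prime_le : ∀ x : α, prime (prime x) ≤ x

class DmsSt (α : Type*) extends DQD α where
  stone : ∀ x : α, SemiHeyting.star x ⊔ SemiHeyting.star (SemiHeyting.star x) = ⊤
  jdm : ∀ x y : α, prime (x ⊔ y) = prime x ⊓ prime y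

open SemiHeyting DQD

section Aux

variable {α : Type*}

lemma sh_distrib [SemiHeyting α] (a b c : α) :
    a ⊓ (b ⊔ c) ≤ (a ⊓ b) ⊔ (a ⊓ c) := by
  set u := (a ⊓ b) ⊔ (a ⊓ c) with hu
  have hua : u ≤ a := sup_le inf_le_left inf_le_left
  have key : ∀ d : α, a ⊓ d ≤ u → d ≤ SemiHeyting.himp a u := by
    intro d hd
    have h1 : d ⊓ u = d ⊓ a := by
      apply le_antisymm
      · exact le_inf inf_le_left (le_trans inf_le_right hua)
      · exact le_inf inf_le_left (by rw [inf_comm]; exact hd)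
    have : d ⊓ SemiHeyting.himp a u = d := by
      rw [SemiHeyting.sh2 d a u, ← h1, SemiHeyting.sh3, inf_top_eq]
    calc d = d ⊓ SemiHeyting.himp a u := this.symm
      _ ≤ SemiHeyting.himp a u := inf_le_right
  have hb : b ≤ SemiHeyting.himp a u := key b le_sup_left
  have hc : c ≤ SemiHeyting.himp a u := key c le_sup_right
  calc a ⊓ (b ⊔ c) ≤ a ⊓ SemiHeyting.himp a u :=
        inf_le_inf_left a (sup_le hb hc)
    _ = a ⊓ u := SemiHeyting.sh1 a u
    _ ≤ u := inf_le_right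

lemma prime_antitone [DQD α] {x y : α} (h : x ≤ y) :
    DQD.prime y ≤ DQD.prime x := by
  have : x ⊓ y = x := inf_eq_left.mpr h
  have h2 := DQD.prime_inf x y
  rw [this] at h2
  calc DQD.prime y ≤ DQD.prime x ⊔ DQD.prime y := le_sup_right
    _ = DQD.prime x := h2.symm

lemma inf_star [SemiHeyting α] (x : α) : x ⊓ SemiHeyting.star x = ⊥ := by
  rw [SemiHeyting.star, SemiHeyting.sh1, inf_bot_eq]

lemma star_prime_le [DmsSt α] (x : α) :
    SemiHeyting.star (DQD.prime x) ≤ DQD.prime (SemiHeyting.star x) := by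
  have htop : DQD.prime x ⊔ DQD.prime (SemiHeyting.star x) = ⊤ := by
    rw [← DQD.prime_inf, inf_star, DQD.prime_bot]
  have h1 : SemiHeyting.star (DQD.prime x)
      ≤ (SemiHeyting.star (DQD.prime x) ⊓ DQD.prime x)
        ⊔ (SemiHeyting.star (DQD.prime x) ⊓ DQD.prime (SemiHeyting.star x)) := by
    calc SemiHeyting.star (DQD.prime x)
        = SemiHeyting.star (DQD.prime x)
            ⊓ (DQD.prime x ⊔ DQD.prime (SemiHeyting.star x)) := by
          rw [htop, inf_top_eq]
      _ ≤ _ := sh_distrib _ _ _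
  have h2 : SemiHeyting.star (DQD.prime x) ⊓ DQD.prime x = ⊥ := by
    rw [inf_comm]; exact inf_star _
  rw [h2, bot_sup_eq] at h1
  exact le_trans h1 inf_le_right

end Aux

theorem stmt15 {α : Type*} [DmsSt α] (x : α) :
    DQD.prime (DQD.prime (SemiHeyting.star x))
      ≤ DQD.prime (SemiHeyting.star (DQD.prime x)) :=
  prime_antitone (star_prime_le x)
end

section
/- Let L be a dually ms Stone semi-Heyting algebra. Then for all x in L, x* ≤ x⁺, where x⁺ := x′*′. -/
open SemiHeyting DQD

section Aux

variable {α : Type*} [SemiHeyting α]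

/-- If `c ⊓ a = c ⊓ b` then `c ≤ a → b`. -/
lemma aux_le_himp {c a b : α} (h : c ⊓ a = c ⊓ b) : c ≤ SemiHeyting.himp a b := by
  have h2 := SemiHeyting.sh2 c a b
  rw [h, SemiHeyting.sh3, inf_top_eq] at h2
  exact inf_eq_left.mp h2

/-- `x ⊓ x* = ⊥`. -/
lemma aux_inf_star (x : α) : x ⊓ SemiHeyting.star x = ⊥ := by
  simpa [SemiHeyting.star] using SemiHeyting.sh1 x ⊥

/-- Semi-Heyting algebras are distributive. -/
lemma aux_distrib (x y z : α) : x ⊓ (y ⊔ z) ≤ (x ⊓ y) ⊔ (x ⊓ z) := by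
  set w := (x ⊓ y) ⊔ (x ⊓ z) with hw
  have hy : y ≤ SemiHeyting.himp x w := by
    apply aux_le_himp
    apply le_antisymm
    · exact le_inf inf_le_left (le_trans (by rw [inf_comm]) le_sup_left)
    · exact le_inf inf_le_left (le_trans inf_le_right
        (sup_le inf_le_left inf_le_left))
  have hz : z ≤ SemiHeyting.himp x w := by
    apply aux_le_himp
    apply le_antisymm
    · exact le_inf inf_le_left (le_trans (by rw [inf_comm]) le_sup_right)
    · exact le_inf inf_le_left (le_trans inf_le_right
        (sup_le inf_le_left inf_le_left))
  calc x ⊓ (y ⊔ z) ≤ x ⊓ SemiHeyting.himp x w :=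
        inf_le_inf_left x (sup_le hy hz)
    _ = x ⊓ w := SemiHeyting.sh1 x w
    _ ≤ w := inf_le_right

end Aux

theorem stmt17 {α : Type*} [DmsSt α] (x : α) :
    SemiHeyting.star x ≤ DQD.prime (SemiHeyting.star (DQD.prime x)) := by
  set c := DQD.prime (SemiHeyting.star (DQD.prime x)) with hc
  -- prime x ⊓ star (prime x) = ⊥, so prime of it is ⊤
  have h1 : DQD.prime (DQD.prime x) ⊔ c = ⊤ := by
    have := congrArg DQD.prime (aux_inf_star (DQD.prime x))
    rwa [DQD.prime_inf, DQD.prime_bot] at this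
  -- star x ⊓ prime (prime x) = ⊥
  have h2 : SemiHeyting.star x ⊓ DQD.prime (DQD.prime x) = ⊥ := by
    apply le_antisymm _ bot_le
    calc SemiHeyting.star x ⊓ DQD.prime (DQD.prime x)
        ≤ SemiHeyting.star x ⊓ x := inf_le_inf_left _ (DQD.prime_prime_le x)
      _ = x ⊓ SemiHeyting.star x := inf_comm _ _
      _ = ⊥ := aux_inf_star x
  calc SemiHeyting.star x
      = SemiHeyting.star x ⊓ (DQD.prime (DQD.prime x) ⊔ c) := by
        rw [h1, inf_top_eq]
    _ ≤ (SemiHeyting.star x ⊓ DQD.prime (DQD.prime x)) ⊔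
        (SemiHeyting.star x ⊓ c) := aux_distrib _ _ _
    _ = SemiHeyting.star x ⊓ c := by rw [h2, bot_sup_eq]
    _ ≤ c := inf_le_right
end
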